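/- arXiv:2510.07630 — 4 statements merged into one kernel-verified Lean document; each statement's English description precedes it below -/
import Mathlib

section
/- For third-order tensors X ∈ R^{m×ℓ×n} and Y ∈ R^{ℓ×q×n}, the Frobenius norm satisfies ‖X * Y‖ ≤ √n · ‖X‖ · ‖Y‖, where * is the t-product. -/
open MeasureTheory ProbabilityTheory
open scoped BigOperators RealInnerProductSpace

noncomputable section

/-- A third-order real tensor of dimensions `m × l × n`. -/
abbrev Tensor (m l n : ℕ) : Type := Fin m → Fin l → Fin n → ℝ

/-- The t-product of third-order tensors. -/
def tmul {m l q n : ℕ} (X : Tensor m l n) (Y : Tensor l q n) : Tensor m q n :=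
  fun i j k => ∑ s : Fin l, ∑ r : Fin n, X i s r * Y s j (k - r)

/-- The tensor transpose: transpose each frontal slice and reverse the order of
slices `1, …, n-1`. -/
def ttransp {m l n : ℕ} (X : Tensor m l n) : Tensor l m n :=
  fun j i k => X i j (-k)

/-- The Frobenius norm of a tensor. -/
def tnorm {m l n : ℕ} (X : Tensor m l n) : ℝ :=
  Real.sqrt (∑ i, ∑ j, ∑ k, (X i j k) ^ 2)

/-- The Frobenius inner product of two tensors. -/
def tinner {m l n : ℕ} (X Y : Tensor m l n) : ℝ :=
  ∑ i, ∑ j, ∑ k, X i j k * Y i j k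

/-- The Hadamard (entrywise) product of two tensors. -/
def had {m l n : ℕ} (C X : Tensor m l n) : Tensor m l n :=
  fun i j k => C i j k * X i j k

/-- The `i`-th row slice of a tensor, viewed as a `1 × l × n` tensor. -/
def rowSlice {m l n : ℕ} (A : Tensor m l n) (i : Fin m) : Tensor 1 l n :=
  fun _ s k => A i s k

lemma pointwise_bound {m l q n : ℕ} (X : Tensor m l n) (Y : Tensor l q n)
    (i : Fin m) (j : Fin q) (k : Fin n) :
    (tmul X Y i j k) ^ 2 ≤ (∑ s, ∑ r, (X i s r) ^ 2) * (∑ s, ∑ r, (Y s j r) ^ 2) := by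
  haveI : NeZero n := ⟨(Fin.pos k).ne'⟩
  have h1 : tmul X Y i j k = ∑ p : Fin l × Fin n, X i p.1 p.2 * Y p.1 j (k - p.2) := by
    rw [tmul]; exact (Fintype.sum_prod_type (f := fun p : Fin l × Fin n => X i p.1 p.2 * Y p.1 j (k - p.2))).symm
  rw [h1]
  calc (∑ p : Fin l × Fin n, X i p.1 p.2 * Y p.1 j (k - p.2)) ^ 2
      ≤ (∑ p : Fin l × Fin n, (X i p.1 p.2) ^ 2) *
          (∑ p : Fin l × Fin n, (Y p.1 j (k - p.2)) ^ 2) :=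
        Finset.sum_mul_sq_le_sq_mul_sq _ _ _
    _ = (∑ s, ∑ r, (X i s r) ^ 2) * (∑ s, ∑ r, (Y s j r) ^ 2) := by
        rw [Fintype.sum_prod_type, Fintype.sum_prod_type]
        congr 1
        refine Finset.sum_congr rfl fun s _ => ?_
        exact Fintype.sum_equiv (Equiv.subLeft k) _ _ (fun r => rfl)

/-- sub-multiplicativity of the Frobenius norm under the t-product:
`‖X ∗ Y‖ ≤ √n ‖X‖ ‖Y‖`. -/
theorem tnorm_tprod_le {m l q n : ℕ} (X : Tensor m l n) (Y : Tensor l q n) :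
    tnorm (tmul X Y) ≤ Real.sqrt n * tnorm X * tnorm Y := by
  have hSX : (0:ℝ) ≤ ∑ i, ∑ s, ∑ r, (X i s r) ^ 2 := by positivity
  have hSY : (0:ℝ) ≤ ∑ s, ∑ j, ∑ r, (Y s j r) ^ 2 := by positivity
  have key : (∑ i, ∑ j, ∑ k, (tmul X Y i j k) ^ 2) ≤
      (n : ℝ) * ((∑ i, ∑ s, ∑ r, (X i s r) ^ 2) * (∑ s, ∑ j, ∑ r, (Y s j r) ^ 2)) := by
    calc (∑ i, ∑ j, ∑ k, (tmul X Y i j k) ^ 2)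
        ≤ ∑ i : Fin m, ∑ j : Fin q, ∑ _k : Fin n,
            (∑ s, ∑ r, (X i s r) ^ 2) * (∑ s, ∑ r, (Y s j r) ^ 2) := by
          refine Finset.sum_le_sum fun i _ => Finset.sum_le_sum fun j _ =>
            Finset.sum_le_sum fun k _ => pointwise_bound X Y i j k
      _ = (n : ℝ) * ((∑ i, ∑ s, ∑ r, (X i s r) ^ 2) * (∑ s, ∑ j, ∑ r, (Y s j r) ^ 2)) := by
          simp only [Finset.sum_const, Finset.card_univ, Fintype.card_fin, nsmul_eq_mul]
          rw [show (∑ s : Fin l, ∑ j : Fin q, ∑ r : Fin n, (Y s j r) ^ 2)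
              = ∑ j : Fin q, ∑ s : Fin l, ∑ r : Fin n, (Y s j r) ^ 2 from Finset.sum_comm]
          rw [Finset.sum_mul_sum, Finset.mul_sum]
          refine Finset.sum_congr rfl fun i _ => ?_
          rw [Finset.mul_sum]
  have := Real.sqrt_le_sqrt key
  calc tnorm (tmul X Y) ≤ Real.sqrt ((n : ℝ) *
        ((∑ i, ∑ s, ∑ r, (X i s r) ^ 2) * (∑ s, ∑ j, ∑ r, (Y s j r) ^ 2))) := this
    _ = Real.sqrt n * tnorm X * tnorm Y := by
        rw [Real.sqrt_mul (by positivity), Real.sqrt_mul hSX, tnorm, tnorm, mul_assoc]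
end
end

section
/- The constant √n in the sub-multiplicativity bound ‖X * Y‖ ≤ √n‖X‖‖Y‖ for the t-product is sharp: if X ∈ R^{m×ℓ×n} and Y ∈ R^{ℓ×q×n} are the all-ones tensors, then ‖X * Y‖ = ℓn√(mqn) = √n · ‖X‖ · ‖Y‖. -/
open MeasureTheory ProbabilityTheory
open scoped BigOperators RealInnerProductSpace

noncomputable section

/-- the constant `√n` is sharp: for the all-ones tensors
`X ∈ ℝ^{m×l×n}` and `Y ∈ ℝ^{l×q×n}` one has
`‖X ∗ Y‖ = l n √(m q n) = √n ‖X‖ ‖Y‖`. -/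
theorem tnorm_tmul_allOnes_sharp (m l q n : ℕ) :
    tnorm (tmul (fun _ _ _ => (1 : ℝ) : Tensor m l n) (fun _ _ _ => (1 : ℝ) : Tensor l q n))
        = (l : ℝ) * n * Real.sqrt ((m : ℝ) * q * n) ∧
    tnorm (tmul (fun _ _ _ => (1 : ℝ) : Tensor m l n) (fun _ _ _ => (1 : ℝ) : Tensor l q n))
        = Real.sqrt n * tnorm (fun _ _ _ => (1 : ℝ) : Tensor m l n)
            * tnorm (fun _ _ _ => (1 : ℝ) : Tensor l q n) := by

  have hmul : tmul (fun _ _ _ => (1 : ℝ) : Tensor m l n) (fun _ _ _ => (1 : ℝ) : Tensor l q n)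
      = fun _ _ _ => (l : ℝ) * n := by
    funext i j k
    simp [tmul, Finset.sum_const, mul_one]
  have hones : ∀ (a b c : ℕ), tnorm (fun _ _ _ => (1 : ℝ) : Tensor a b c)
      = Real.sqrt ((a : ℝ) * b * c) := by
    intro a b c
    simp [tnorm, Finset.sum_const]
    ring_nf
  have h1 : tnorm (tmul (fun _ _ _ => (1 : ℝ) : Tensor m l n) (fun _ _ _ => (1 : ℝ) : Tensor l q n))
      = (l : ℝ) * n * Real.sqrt ((m : ℝ) * q * n) := by
    rw [hmul]
    simp only [tnorm, Finset.sum_const, Finset.card_univ, Fintype.card_fin, nsmul_eq_mul]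
    rw [show (m:ℝ) * ((q:ℝ) * ((n:ℝ) * ((l:ℝ)*n)^2)) = ((l:ℝ)*n)^2 * ((m:ℝ)*q*n) by ring,
      Real.sqrt_mul (by positivity), Real.sqrt_sq (by positivity)]
  refine ⟨h1, ?_⟩
  rw [h1, hones, hones, ← Real.sqrt_mul (by positivity), ← Real.sqrt_mul (by positivity),
    show (n:ℝ) * ((m:ℝ)*l*n) * ((l:ℝ)*q*n) = ((l:ℝ)*n)^2 * ((m:ℝ)*q*n) by ring,
    Real.sqrt_mul (show (0:ℝ) ≤ ((l:ℝ)*n)^2 by positivity) ((m:ℝ)*q*n),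
    Real.sqrt_sq (show (0:ℝ) ≤ (l:ℝ)*n by positivity)]
end
end

section
/- Let C be a tensor satisfying E_D[C ∘ (Ã_i* ∗ Ã_i)] = p·C ∘ (A_i* ∗ A_i) and E_D[(1 − C) ∘ (Ã_i* ∗ Ã_i)] = p²·(1 − C) ∘ (A_i* ∗ A_i) for all rows i, and suppose E[Ã] = p·A. Define g(X) = (1/p²)·Ã_i* ∗ (Ã_i ∗ X − p·B_i) − ((1−p)/p²)·C ∘ (Ã_i* ∗ Ã_i) ∗ X, where i is drawn uniformly from {0,...,m−1}. Then E[g(X)] = (1/m)·A* ∗ (A ∗ X − B) = ∇F(X), where F(X) = (1/2m)‖A ∗ X − B‖². -/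
open MeasureTheory ProbabilityTheory
open scoped BigOperators RealInnerProductSpace

noncomputable section

lemma aux_abs_mul_le_half (a b : ℝ) : |a * b| ≤ (a*a + b*b)/2 := by
  rw [abs_le]; constructor <;> nlinarith [sq_nonneg (a+b), sq_nonneg (a-b)]

lemma aux_conv_key {n : ℕ} [NeZero n] (u v w : Fin n → ℝ) (k : Fin n) :
    ∑ r1 : Fin n, ∑ r2 : Fin n, u r1 * (v r2 * w (k - r1 - r2))
      = ∑ r : Fin n, (∑ r' : Fin n, u r' * v (r - r')) * w (k - r) := by
  have h : ∀ r' : Fin n, ∑ r2 : Fin n, u r' * (v r2 * w (k - r' - r2))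
      = ∑ r : Fin n, u r' * v (r - r') * w (k - r) := by
    intro r'
    refine Fintype.sum_equiv (Equiv.addLeft r') _ _ (fun r2 => ?_)
    simp only [Equiv.coe_addLeft, add_sub_cancel_left, sub_add_eq_sub_sub]
    ring
  calc ∑ r1 : Fin n, ∑ r2 : Fin n, u r1 * (v r2 * w (k - r1 - r2))
      = ∑ r1 : Fin n, ∑ r : Fin n, u r1 * v (r - r1) * w (k - r) :=
        Finset.sum_congr rfl (fun r' _ => h r')
    _ = ∑ r : Fin n, ∑ r' : Fin n, u r' * v (r - r') * w (k - r) := Finset.sum_comm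
    _ = ∑ r : Fin n, (∑ r' : Fin n, u r' * v (r - r')) * w (k - r) := by
        simp [Finset.sum_mul]

lemma aux_expand {l n : ℕ} [NeZero n] (u : Fin n → ℝ) (v : Fin l → Fin n → ℝ)
    (w : Fin l → Fin n → ℝ) (b : Fin n → ℝ) (k : Fin n) :
    ∑ r1 : Fin n, u r1 * ((∑ s : Fin l, ∑ r2 : Fin n, v s r2 * w s (k - r1 - r2)) - b r1)
      = (∑ s : Fin l, ∑ r : Fin n, (∑ r' : Fin n, u r' * v s (r - r')) * w s (k - r))
        - ∑ r1 : Fin n, u r1 * b r1 := by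
  have h1 : ∀ r1 : Fin n, u r1 * ((∑ s : Fin l, ∑ r2 : Fin n, v s r2 * w s (k - r1 - r2)) - b r1)
      = (∑ s : Fin l, ∑ r2 : Fin n, u r1 * (v s r2 * w s (k - r1 - r2))) - u r1 * b r1 := by
    intro r1
    rw [mul_sub, Finset.mul_sum]
    congr 1
    exact Finset.sum_congr rfl fun s _ => Finset.mul_sum _ _ _
  simp only [h1, Finset.sum_sub_distrib]
  congr 1
  rw [Finset.sum_comm]
  exact Finset.sum_congr rfl fun s _ => aux_conv_key u (v s) (w s) k

/-- if `C` satisfies (for every row `i`)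
`E_D[C ∘ (Ã_i* ∗ Ã_i)] = p C ∘ (A_i* ∗ A_i)` and
`E_D[(1 − C) ∘ (Ã_i* ∗ Ã_i)] = p² (1 − C) ∘ (A_i* ∗ A_i)`, and `E[Ã] = p A`, then
the stochastic direction
`g(X) = (1/p²) Ã_i* ∗ (Ã_i ∗ X − p B_i) − ((1−p)/p²) C ∘ (Ã_i* ∗ Ã_i) ∗ X`, with the
row index `i` uniform on `{0,…,m−1}`, is an unbiased estimator of the gradient:
`E[g(X)] = (1/m) A* ∗ (A ∗ X − B) = ∇F(X)`. -/
theorem unbiased_gradient_estimate {m l q n : ℕ} {Ω : Type*} [MeasurableSpace Ω]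
    (μ : Measure Ω) [IsProbabilityMeasure μ] (p : ℝ) (hp : p ≠ 0)
    (A : Tensor m l n) (B : Tensor m q n) (X : Tensor l q n)
    (D : Ω → Tensor m l n) (C : Tensor l l n)
    (hC1 : ∀ (i : Fin m) (x y : Fin l) (r : Fin n),
      ∫ ω, had C (tmul (ttransp (rowSlice (had (D ω) A) i)) (rowSlice (had (D ω) A) i)) x y r ∂μ
        = p * had C (tmul (ttransp (rowSlice A i)) (rowSlice A i)) x y r)
    (hC2 : ∀ (i : Fin m) (x y : Fin l) (r : Fin n),
      ∫ ω, (1 - C x y r)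
          * tmul (ttransp (rowSlice (had (D ω) A) i)) (rowSlice (had (D ω) A) i) x y r ∂μ
        = p ^ 2 * ((1 - C x y r) * tmul (ttransp (rowSlice A i)) (rowSlice A i) x y r))
    (hEA : ∀ (i : Fin m) (j : Fin l) (k : Fin n),
      ∫ ω, had (D ω) A i j k ∂μ = p * A i j k) :
    ∀ (x : Fin l) (y : Fin q) (k : Fin n),
      (1 / (m : ℝ)) * ∑ i : Fin m,
        ∫ ω,
          ((1 / p ^ 2) * tmul (ttransp (rowSlice (had (D ω) A) i))
              (tmul (rowSlice (had (D ω) A) i) X - p • rowSlice B i) x y k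
            - ((1 - p) / p ^ 2)
              * tmul (had C (tmul (ttransp (rowSlice (had (D ω) A) i))
                  (rowSlice (had (D ω) A) i))) X x y k) ∂μ
      = (1 / (m : ℝ)) * tmul (ttransp A) (tmul A X - B) x y k := by
  intro x y k
  haveI : NeZero n := ⟨by have := k.isLt; omega⟩
  congr 1
  have hRHS : tmul (ttransp A) (tmul A X - B) x y k
      = ∑ i : Fin m, ∑ r : Fin n, A i x (-r) * (tmul A X i y (k - r) - B i y (k - r)) := by
    simp [tmul, ttransp, Pi.sub_apply]
  rw [hRHS]
  refine Finset.sum_congr rfl fun i _ => ?_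
  simp only [tmul, ttransp, rowSlice, had, Pi.sub_apply, Pi.smul_apply, smul_eq_mul,
    Fin.sum_univ_one]
  -- entries are integrable
  have he : ∀ (j : Fin l) (r : Fin n), Integrable (fun ω => D ω i j r * A i j r) μ := by
    intro j r
    by_cases hA : A i j r = 0
    · simpa [hA] using (integrable_zero Ω ℝ μ)
    · by_contra h
      have h0 := integral_undef h
      have h1 := hEA i j r
      simp only [had] at h1
      rw [h0] at h1
      exact mul_ne_zero hp hA h1.symm
  -- squares are integrable
  have hsq : ∀ (a : Fin l) (r1 : Fin n),
      Integrable (fun ω => D ω i a r1 * A i a r1 * (D ω i a r1 * A i a r1)) μ := by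
    intro a r1
    by_cases hA : A i a r1 = 0
    · simpa [hA] using (integrable_zero Ω ℝ μ)
    · have hN : (0:ℝ) < ∑ r' : Fin n, A i a (-r') * A i a (-r') := by
        refine Finset.sum_pos' (fun r' _ => mul_self_nonneg _) ⟨-r1, Finset.mem_univ _, ?_⟩
        rw [neg_neg]
        exact mul_self_pos.mpr hA
      have hTint : Integrable (fun ω => ∑ r' : Fin n,
          D ω i a (-r') * A i a (-r') * (D ω i a (-r') * A i a (-r'))) μ := by
        by_cases hc : C a a 0 = 0
        · have h2 := hC2 i a a 0
          simp only [tmul, ttransp, rowSlice, had, Fin.sum_univ_one, zero_sub, hc, sub_zero,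
            one_mul] at h2
          by_contra hni
          rw [integral_undef hni] at h2
          exact mul_ne_zero (pow_ne_zero 2 hp) hN.ne' h2.symm
        · have h1 := hC1 i a a 0
          simp only [tmul, ttransp, rowSlice, had, Fin.sum_univ_one, zero_sub] at h1
          rw [integral_const_mul] at h1
          by_contra hni
          rw [integral_undef hni, mul_zero] at h1
          exact mul_ne_zero hp (mul_ne_zero hc hN.ne') h1.symm
      refine hTint.mono' ((he a r1).aestronglyMeasurable.mul (he a r1).aestronglyMeasurable)
        (ae_of_all _ fun ω => ?_)
      rw [Real.norm_eq_abs, abs_of_nonneg (mul_self_nonneg _)]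
      have := Finset.single_le_sum
        (f := fun r' => D ω i a (-r') * A i a (-r') * (D ω i a (-r') * A i a (-r')))
        (fun r' _ => mul_self_nonneg _) (Finset.mem_univ (-r1))
      simpa [neg_neg] using this
  -- products are integrable
  have hprod : ∀ (a : Fin l) (r1 : Fin n) (b : Fin l) (r2 : Fin n),
      Integrable (fun ω => D ω i a r1 * A i a r1 * (D ω i b r2 * A i b r2)) μ := by
    intro a r1 b r2
    refine (((hsq a r1).add (hsq b r2)).div_const 2).mono'
      ((he a r1).aestronglyMeasurable.mul (he b r2).aestronglyMeasurable)
      (ae_of_all _ fun ω => ?_)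
    rw [Real.norm_eq_abs]
    exact aux_abs_mul_le_half _ _
  have hTint2 : ∀ (s : Fin l) (r : Fin n), Integrable (fun ω => ∑ r' : Fin n,
      D ω i x (-r') * A i x (-r') * (D ω i s (r - r') * A i s (r - r'))) μ :=
    fun s r => integrable_finset_sum _ (fun r' _ => hprod x (-r') s (r - r'))
  -- the key expected-value identity
  have hIM : ∀ (s : Fin l) (r : Fin n),
      (p * C x s r + (1 - C x s r)) * ∫ ω, (∑ r' : Fin n,
          D ω i x (-r') * A i x (-r') * (D ω i s (r - r') * A i s (r - r'))) ∂μ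
        = p ^ 2 * ∑ r' : Fin n, A i x (-r') * A i s (r - r') := by
    intro s r
    have h1 := hC1 i x s r
    have h2 := hC2 i x s r
    simp only [tmul, ttransp, rowSlice, had, Fin.sum_univ_one] at h1 h2
    rw [integral_const_mul] at h1 h2
    linear_combination p * h1 + h2
  -- pointwise rewriting of the integrand
  have hpt : ∀ ω : Ω,
      1 / p ^ 2 *
          ∑ r1 : Fin n,
            D ω i x (-r1) * A i x (-r1) *
              ((∑ s : Fin l, ∑ r2 : Fin n, D ω i s r2 * A i s r2 * X s y (k - r1 - r2))
                - p * B i y (k - r1)) -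
        (1 - p) / p ^ 2 *
          ∑ s : Fin l, ∑ r : Fin n,
              (C x s r *
                  ∑ r' : Fin n, D ω i x (-r') * A i x (-r')
                    * (D ω i s (r - r') * A i s (r - r'))) * X s y (k - r)
      = 1 / p ^ 2 *
          ((∑ s : Fin l, ∑ r : Fin n,
              ((p * C x s r + (1 - C x s r)) * X s y (k - r)) *
                ∑ r' : Fin n, D ω i x (-r') * A i x (-r')
                  * (D ω i s (r - r') * A i s (r - r')))
            + ∑ r : Fin n, (-(p * B i y (k - r))) * (D ω i x (-r) * A i x (-r))) := by
    intro ω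
    have e1 : ∑ r1 : Fin n,
        D ω i x (-r1) * A i x (-r1) *
          ((∑ s : Fin l, ∑ r2 : Fin n, D ω i s r2 * A i s r2 * X s y (k - r1 - r2))
            - p * B i y (k - r1))
        = (∑ s : Fin l, ∑ r : Fin n,
            (∑ r' : Fin n, D ω i x (-r') * A i x (-r')
              * (D ω i s (r - r') * A i s (r - r'))) * X s y (k - r))
          - ∑ r1 : Fin n, D ω i x (-r1) * A i x (-r1) * (p * B i y (k - r1)) :=
      aux_expand (fun r1 => D ω i x (-r1) * A i x (-r1))
        (fun s r2 => D ω i s r2 * A i s r2) (fun s c => X s y c)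
        (fun r1 => p * B i y (k - r1)) k
    rw [e1]
    have e2 : ∑ s : Fin l, ∑ r : Fin n,
        ((p * C x s r + (1 - C x s r)) * X s y (k - r)) *
          ∑ r' : Fin n, D ω i x (-r') * A i x (-r') * (D ω i s (r - r') * A i s (r - r'))
        = (∑ s : Fin l, ∑ r : Fin n,
            (∑ r' : Fin n, D ω i x (-r') * A i x (-r')
              * (D ω i s (r - r') * A i s (r - r'))) * X s y (k - r))
          - (1 - p) * ∑ s : Fin l, ∑ r : Fin n,
              (C x s r *
                ∑ r' : Fin n, D ω i x (-r') * A i x (-r')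
                  * (D ω i s (r - r') * A i s (r - r'))) * X s y (k - r) := by
      rw [Finset.mul_sum, ← Finset.sum_sub_distrib]
      refine Finset.sum_congr rfl fun s _ => ?_
      rw [Finset.mul_sum, ← Finset.sum_sub_distrib]
      exact Finset.sum_congr rfl fun r _ => by ring
    have e3 : ∑ r : Fin n, (-(p * B i y (k - r))) * (D ω i x (-r) * A i x (-r))
        = - ∑ r1 : Fin n, D ω i x (-r1) * A i x (-r1) * (p * B i y (k - r1)) := by
      rw [← Finset.sum_neg_distrib]
      exact Finset.sum_congr rfl fun r _ => by ring
    rw [e2, e3]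
    ring
  simp only [hpt]
  rw [integral_const_mul]
  rw [integral_add
    (integrable_finset_sum _ fun s _ => integrable_finset_sum _ fun r _ =>
      ((hTint2 s r).const_mul _))
    (integrable_finset_sum _ fun r _ => ((he x (-r)).const_mul _))]
  rw [integral_finset_sum _ (fun s _ => integrable_finset_sum _ fun r _ =>
    ((hTint2 s r).const_mul _))]
  rw [integral_finset_sum _ (fun r _ => ((he x (-r)).const_mul _))]
  have hI1 : ∑ s : Fin l, ∫ ω, (∑ r : Fin n,
        ((p * C x s r + (1 - C x s r)) * X s y (k - r)) *
          ∑ r' : Fin n, D ω i x (-r') * A i x (-r')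
            * (D ω i s (r - r') * A i s (r - r'))) ∂μ
      = ∑ s : Fin l, ∑ r : Fin n,
          p ^ 2 * ((∑ r' : Fin n, A i x (-r') * A i s (r - r')) * X s y (k - r)) := by
    refine Finset.sum_congr rfl fun s _ => ?_
    rw [integral_finset_sum _ (fun r _ => ((hTint2 s r).const_mul _))]
    refine Finset.sum_congr rfl fun r _ => ?_
    rw [integral_const_mul]
    linear_combination X s y (k - r) * hIM s r
  have hI2 : ∑ r : Fin n, ∫ ω, (-(p * B i y (k - r))) * (D ω i x (-r) * A i x (-r)) ∂μ
      = ∑ r : Fin n, p ^ 2 * (-(A i x (-r) * B i y (k - r))) := by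
    refine Finset.sum_congr rfl fun r _ => ?_
    rw [integral_const_mul]
    have h1 := hEA i x (-r)
    simp only [had] at h1
    rw [h1]
    ring
  rw [hI1, hI2]
  have hRHS2 : ∑ r1 : Fin n,
      A i x (-r1) * ((∑ s : Fin l, ∑ r2 : Fin n, A i s r2 * X s y (k - r1 - r2))
        - B i y (k - r1))
      = (∑ s : Fin l, ∑ r : Fin n,
          (∑ r' : Fin n, A i x (-r') * A i s (r - r')) * X s y (k - r))
        - ∑ r1 : Fin n, A i x (-r1) * B i y (k - r1) :=
    aux_expand (fun r1 => A i x (-r1)) (fun s r2 => A i s r2) (fun s c => X s y c)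
      (fun r1 => B i y (k - r1)) k
  rw [hRHS2]
  simp only [← Finset.mul_sum, Finset.sum_neg_distrib]
  field_simp
  ring
end
end

section
/- Let F(X) = (1/2m)‖A ∗ X − B‖² for a tensor A ∈ R^{m×ℓ×n} with m > ℓ, and let σ_min be the smallest singular value of bdiag(Â), where Â is obtained by applying the discrete Fourier transform along the tubes of A. Then F is (σ_min²/m)-strongly convex. -/
open MeasureTheory ProbabilityTheory
open scoped BigOperators RealInnerProductSpace

noncomputable section

/-- The tensor `Â` obtained by applying the `n`-point DFT along the tubes of `A`. -/
def dftTubes {m l n : ℕ} (A : Tensor m l n) : Fin m → Fin l → Fin n → ℂ :=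
  fun i j k => ∑ r : Fin n,
    (A i j r : ℂ) * Complex.exp (-(2 * (Real.pi : ℂ) * Complex.I * (k : ℕ) * (r : ℕ)) / n)

/-- The block diagonal matrix `bdiag(Â)` whose diagonal blocks are the frontal
slices of `Â`. -/
def bdiagDFT {m l n : ℕ} (A : Tensor m l n) :
    Matrix (Fin m × Fin n) (Fin l × Fin n) ℂ :=
  fun ik jk => if ik.2 = jk.2 then dftTubes A ik.1 jk.1 ik.2 else 0

set_option linter.unusedSectionVars false
set_option maxHeartbeats 1000000

/-- The additive character `d ↦ exp(2πi d / n)`. -/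
noncomputable def E (n : ℕ) (d : ℤ) : ℂ := Complex.exp (2 * Real.pi * Complex.I * d / n)

section CharLemmas
variable {n : ℕ} [NeZero n]

lemma E_add (a b : ℤ) : E n (a + b) = E n a * E n b := by
  rw [E, E, E, ← Complex.exp_add]; congr 1; push_cast; ring

lemma E_dvd {d : ℤ} (h : (n:ℤ) ∣ d) : E n d = 1 := by
  obtain ⟨c, rfl⟩ := h
  have hn : (n:ℂ) ≠ 0 := Nat.cast_ne_zero.mpr (NeZero.ne n)
  rw [E, show (2 * (Real.pi:ℂ) * Complex.I * ((n:ℤ) * c : ℤ) / n) = (c:ℤ) * (2 * Real.pi * Complex.I) by push_cast; field_simp]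
  exact Complex.exp_int_mul_two_pi_mul_I c

lemma E_eq_one_iff {d : ℤ} : E n d = 1 ↔ (n:ℤ) ∣ d := by
  constructor
  · intro h
    obtain ⟨k, hk⟩ := Complex.exp_eq_one_iff.mp h
    have hn : (n:ℂ) ≠ 0 := Nat.cast_ne_zero.mpr (NeZero.ne n)
    have hπ : (Real.pi:ℂ) ≠ 0 := Complex.ofReal_ne_zero.mpr Real.pi_ne_zero
    have h2 : (2:ℂ) * Real.pi * Complex.I ≠ 0 := by simp [hπ, Complex.I_ne_zero]
    have hd : (d:ℂ) = k * n := by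
      field_simp at hk
      apply mul_left_cancel₀ h2
      rw [hk]; ring
    have : (d:ℤ) = k * n := by exact_mod_cast hd
    exact ⟨k, by linarith⟩
  · exact E_dvd

lemma E_congr {a b : ℤ} (h : (n:ℤ) ∣ a - b) : E n a = E n b := by
  have : E n a = E n b * E n (a - b) := by rw [← E_add]; ring_nf
  rw [this, E_dvd h, mul_one]

lemma E_pow (m : ℕ) (d : ℤ) : E n d ^ m = E n (m * d) := by
  rw [E, E, ← Complex.exp_nat_mul]; congr 1; push_cast; ring

lemma conj_E (d : ℤ) : (starRingEnd ℂ) (E n d) = E n (-d) := by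
  rw [E, E, ← Complex.exp_conj]; congr 1
  simp only [map_div₀, map_mul, Complex.conj_I, Complex.conj_ofReal, map_ofNat, map_intCast, map_natCast]
  push_cast; ring

lemma sum_E (d : ℤ) : ∑ κ : Fin n, E n (κ * d) = if (n:ℤ) ∣ d then (n:ℂ) else 0 := by
  have h1 : ∀ κ : Fin n, E n (κ * d) = E n d ^ (κ:ℕ) := fun κ => by
    rw [E_pow]
  simp_rw [h1]
  rw [Fin.sum_univ_eq_sum_range (fun i => E n d ^ i)]
  by_cases h : (n:ℤ) ∣ d
  · simp [E_dvd h, h]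
  · have hne : E n d ≠ 1 := fun hc => h (E_eq_one_iff.mp hc)
    have hpow : E n d ^ n = 1 := by rw [E_pow]; exact E_dvd ⟨d, rfl⟩
    rw [geom_sum_eq hne, hpow]
    simp [h]

lemma fin_dvd_iff (r r' : Fin n) : (n:ℤ) ∣ ((r':ℕ):ℤ) - ((r:ℕ):ℤ) ↔ r' = r := by
  constructor
  · rintro ⟨c, hc⟩
    have h1 : ((r':ℕ):ℤ) < n := by exact_mod_cast r'.isLt
    have h2 : ((r:ℕ):ℤ) < n := by exact_mod_cast r.isLt
    have h3 : (0:ℤ) ≤ ((r':ℕ):ℤ) := Int.ofNat_nonneg _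
    have h4 : (0:ℤ) ≤ ((r:ℕ):ℤ) := Int.ofNat_nonneg _
    have hc0 : c = 0 := by
      rcases lt_trichotomy c 0 with h|h|h
      · nlinarith
      · exact h
      · nlinarith
    subst hc0
    have : ((r':ℕ):ℤ) = ((r:ℕ):ℤ) := by omega
    exact Fin.ext (by exact_mod_cast this)
  · rintro rfl; simp

lemma parseval (f : Fin n → ℝ) :
    ∑ κ : Fin n, Complex.normSq (∑ r : Fin n, (f r:ℂ) * E n (-((κ:ℕ) * (r:ℕ)))) = n * ∑ r, f r ^ 2 := by
  have hconj : ∀ κ : Fin n, (starRingEnd ℂ) (∑ r : Fin n, (f r:ℂ) * E n (-((κ:ℕ) * (r:ℕ)))) =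
      ∑ r : Fin n, (f r:ℂ) * E n ((κ:ℕ) * (r:ℕ)) := by
    intro κ
    rw [map_sum]
    refine Finset.sum_congr rfl fun r _ => ?_
    rw [map_mul, conj_E, Complex.conj_ofReal, neg_neg]
  have key : ∑ κ : Fin n, ((∑ r : Fin n, (f r:ℂ) * E n (-((κ:ℕ) * (r:ℕ)))) *
      (starRingEnd ℂ) (∑ r : Fin n, (f r:ℂ) * E n (-((κ:ℕ) * (r:ℕ))))) = (n:ℂ) * ∑ r, (f r:ℂ)^2 := by
    simp_rw [hconj, Finset.sum_mul_sum]
    have hterm : ∀ (κ r r' : Fin n), ((f r:ℂ) * E n (-((κ:ℕ) * (r:ℕ)))) * ((f r':ℂ) * E n ((κ:ℕ) * (r':ℕ))) =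
        (f r:ℂ) * f r' * E n ((κ:ℕ) * (((r':ℕ):ℤ) - ((r:ℕ):ℤ))) := by
      intro κ r r'
      rw [show ((κ:ℕ):ℤ) * (((r':ℕ):ℤ) - ((r:ℕ):ℤ)) = -(((κ:ℕ):ℤ) * ((r:ℕ):ℤ)) + ((κ:ℕ):ℤ) * ((r':ℕ):ℤ) by ring, E_add]
      ring
    simp_rw [hterm]
    rw [Finset.sum_comm]
    have hinner : ∀ r : Fin n, ∑ κ : Fin n, ∑ r' : Fin n,
        (f r:ℂ) * f r' * E n ((κ:ℕ) * (((r':ℕ):ℤ) - ((r:ℕ):ℤ))) = (n:ℂ) * f r ^ 2 := by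
      intro r
      rw [Finset.sum_comm]
      have h1 : ∀ r' : Fin n, ∑ κ : Fin n, (f r:ℂ) * f r' * E n ((κ:ℕ) * (((r':ℕ):ℤ) - ((r:ℕ):ℤ))) =
          (f r:ℂ) * f r' * (if (n:ℤ) ∣ (((r':ℕ):ℤ) - ((r:ℕ):ℤ)) then (n:ℂ) else 0) := by
        intro r'
        rw [← Finset.mul_sum, ← sum_E]
      simp_rw [h1, fin_dvd_iff]
      simp only [mul_ite, mul_zero]
      rw [Finset.sum_ite_eq' Finset.univ r (fun r' => (f r:ℂ) * f r' * n)]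
      simp
      ring
    rw [Finset.sum_congr rfl fun r _ => hinner r, ← Finset.mul_sum]
  simp_rw [Complex.mul_conj] at key
  have := key
  push_cast at this
  exact_mod_cast this

end CharLemmas

section TensorLemmas
variable {n : ℕ} [NeZero n]

lemma dftTubes_eq {m l : ℕ} (A : Tensor m l n) (i : Fin m) (j : Fin l) (k : Fin n) :
    dftTubes A i j k = ∑ r : Fin n, (A i j r : ℂ) * E n (-((k:ℕ) * (r:ℕ))) := by
  refine Finset.sum_congr rfl fun r _ => ?_
  rw [E]
  congr 1
  push_cast
  ring

lemma conv_thm {m l q : ℕ} (A : Tensor m l n) (Z : Tensor l q n) (i : Fin m) (j : Fin q) (κ : Fin n) :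
    dftTubes (tmul A Z) i j κ = ∑ s : Fin l, dftTubes A i s κ * dftTubes Z s j κ := by
  simp_rw [dftTubes_eq]
  have hL : ∀ k : Fin n, ((tmul A Z i j k : ℝ):ℂ)
      = ∑ s : Fin l, ∑ r : Fin n, (A i s r:ℂ) * (Z s j (k - r):ℂ) := by
    intro k; simp [tmul]
  simp_rw [hL, Finset.sum_mul]
  rw [Finset.sum_comm]
  refine Finset.sum_congr rfl fun s _ => ?_
  rw [Finset.sum_comm]
  refine Finset.sum_congr rfl fun r _ => ?_
  rw [Finset.mul_sum]
  rw [← Equiv.sum_comp (Equiv.addLeft r)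
    (fun k => (A i s r:ℂ) * (Z s j (k - r):ℂ) * E n (-((κ:ℕ) * (k:ℕ))))]
  refine Finset.sum_congr rfl fun u _ => ?_
  simp only [Equiv.coe_addLeft]
  have h1 : (r + u) - r = u := by abel
  have h2 : E n (-(((κ:ℕ):ℤ) * (((r+u : Fin n):ℕ):ℤ)))
      = E n (-((κ:ℕ) * ((r:ℕ):ℤ))) * E n (-((κ:ℕ) * ((u:ℕ):ℤ))) := by
    rw [← E_add]
    apply E_congr
    have hv : (((r+u : Fin n):ℕ):ℤ) = ((((r:ℕ) + (u:ℕ)) % n : ℕ) : ℤ) := by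
      rw [Fin.val_add]
    set a : ℤ := ((r:ℕ):ℤ) + ((u:ℕ):ℤ) with ha
    have hv2 : (((r+u : Fin n):ℕ):ℤ) = a % n := by
      rw [hv]; push_cast; rfl
    rw [hv2, Int.emod_def]
    exact ⟨((κ:ℕ):ℤ) * (a / n), by ring⟩
  rw [h1, h2]
  ring

lemma mulVec_eq {m l q : ℕ} (A : Tensor m l n) (Z : Tensor l q n) (j : Fin q) (i : Fin m) (κ : Fin n) :
    Matrix.mulVec (bdiagDFT A) (fun p : Fin l × Fin n => dftTubes Z p.1 j p.2) (i, κ)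
      = dftTubes (tmul A Z) i j κ := by
  rw [conv_thm]
  simp only [Matrix.mulVec, dotProduct, bdiagDFT]
  rw [Fintype.sum_prod_type]
  refine Finset.sum_congr rfl fun s _ => ?_
  simp [Finset.sum_ite_eq]

lemma key_bound {m l q : ℕ} (A : Tensor m l n) (σmin : ℝ)
    (hσ : ∀ v : Fin l × Fin n → ℂ,
      σmin ^ 2 * ∑ x : Fin l × Fin n, ‖v x‖ ^ 2
        ≤ ∑ y : Fin m × Fin n, ‖Matrix.mulVec (bdiagDFT A) v y‖ ^ 2)
    (Z : Tensor l q n) :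
    σmin ^ 2 * (∑ s, ∑ j, ∑ r, Z s j r ^ 2) ≤ ∑ i, ∑ j, ∑ k, (tmul A Z i j k) ^ 2 := by
  have hn : (0:ℝ) < n := by exact_mod_cast (NeZero.ne n).bot_lt
  have hj : ∀ j : Fin q,
      σmin ^ 2 * (∑ s, ∑ r : Fin n, Z s j r ^ 2) ≤ ∑ i, ∑ k, (tmul A Z i j k) ^ 2 := by
    intro j
    have h := hσ (fun p => dftTubes Z p.1 j p.2)
    have hL : ∑ x : Fin l × Fin n, ‖dftTubes Z x.1 j x.2‖ ^ 2
        = n * ∑ s, ∑ r, Z s j r ^ 2 := by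
      simp_rw [Complex.sq_norm]
      rw [Fintype.sum_prod_type]
      have h1 : ∀ s : Fin l, ∑ κ : Fin n, Complex.normSq (dftTubes Z s j κ)
          = n * ∑ r, Z s j r ^ 2 := by
        intro s; simp_rw [dftTubes_eq]; exact parseval (fun r => Z s j r)
      simp_rw [h1]
      rw [← Finset.mul_sum]
    have hR : ∑ y : Fin m × Fin n,
        ‖Matrix.mulVec (bdiagDFT A) (fun p => dftTubes Z p.1 j p.2) y‖ ^ 2
        = n * ∑ i, ∑ k, (tmul A Z i j k) ^ 2 := by
      simp_rw [Complex.sq_norm]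
      rw [Fintype.sum_prod_type]
      have h1 : ∀ (i : Fin m) (κ : Fin n),
          Complex.normSq (Matrix.mulVec (bdiagDFT A) (fun p => dftTubes Z p.1 j p.2) (i, κ))
          = Complex.normSq (dftTubes (tmul A Z) i j κ) := by
        intro i κ; rw [mulVec_eq]
      simp_rw [h1]
      have h2 : ∀ i : Fin m, ∑ κ : Fin n, Complex.normSq (dftTubes (tmul A Z) i j κ)
          = n * ∑ k, (tmul A Z i j k) ^ 2 := by
        intro i; simp_rw [dftTubes_eq]; exact parseval (fun k => tmul A Z i j k)
      simp_rw [h2]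
      rw [← Finset.mul_sum]
    rw [hL, hR] at h
    have h' : (n:ℝ) * (σmin ^ 2 * (∑ s, ∑ r : Fin n, Z s j r ^ 2))
        ≤ (n:ℝ) * (∑ i, ∑ k, (tmul A Z i j k) ^ 2) := by linarith
    exact le_of_mul_le_mul_left h' hn
  calc σmin ^ 2 * (∑ s, ∑ j, ∑ r, Z s j r ^ 2)
      = ∑ j, σmin ^ 2 * (∑ s, ∑ r : Fin n, Z s j r ^ 2) := by
        rw [← Finset.mul_sum, Finset.sum_comm]
    _ ≤ ∑ j, ∑ i, ∑ k, (tmul A Z i j k) ^ 2 := Finset.sum_le_sum fun j _ => hj j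
    _ = ∑ i, ∑ j, ∑ k, (tmul A Z i j k) ^ 2 := Finset.sum_comm

end TensorLemmas

/-- for `F(X) = (1/2m)‖A ∗ X − B‖²` with `A ∈ ℝ^{m×l×n}` tall
(`m > l`), if `σmin` is the smallest singular value of `bdiag(Â)` (formalized:
`σmin² ‖v‖² ≤ ‖bdiag(Â) v‖²` for all `v`), then `F` is `σmin²/m`-strongly convex. -/
theorem objective_strongly_convex {m l q n : ℕ} [NeZero n] (hml : l < m)
    (A : Tensor m l n) (B : Tensor m q n) (σmin : ℝ)
    (hσ : ∀ v : Fin l × Fin n → ℂ,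
      σmin ^ 2 * ∑ x : Fin l × Fin n, ‖v x‖ ^ 2
        ≤ ∑ y : Fin m × Fin n, ‖Matrix.mulVec (bdiagDFT A) v y‖ ^ 2) :
    ∀ (X Y : Tensor l q n) (t : ℝ), 0 ≤ t → t ≤ 1 →
      (1 / (2 * (m : ℝ))) * tnorm (tmul A (t • X + (1 - t) • Y) - B) ^ 2
        ≤ t * ((1 / (2 * (m : ℝ))) * tnorm (tmul A X - B) ^ 2)
          + (1 - t) * ((1 / (2 * (m : ℝ))) * tnorm (tmul A Y - B) ^ 2)
          - σmin ^ 2 / m / 2 * (t * (1 - t)) * tnorm (X - Y) ^ 2 := by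
  intro X Y t ht0 ht1
  have hm : (0:ℝ) < m := by
    have : 0 < m := lt_of_le_of_lt (Nat.zero_le l) hml
    exact_mod_cast this
  have tnsq : ∀ {a b c : ℕ} (W : Tensor a b c), tnorm W ^ 2 = ∑ i, ∑ j, ∑ k, W i j k ^ 2 := by
    intro a b c W
    rw [tnorm, Real.sq_sqrt (by positivity)]
  have hlin : ∀ (i : Fin m) (j : Fin q) (k : Fin n),
      tmul A (t • X + (1 - t) • Y) i j k = t * tmul A X i j k + (1 - t) * tmul A Y i j k := by
    intro i j k
    have hpt : ∀ (s : Fin l) (r : Fin n),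
        A i s r * (t * X s j (k - r) + (1 - t) * Y s j (k - r))
          = t * (A i s r * X s j (k - r)) + (1 - t) * (A i s r * Y s j (k - r)) := by
      intros; ring
    simp_rw [tmul, Pi.add_apply, Pi.smul_apply, smul_eq_mul, hpt,
      Finset.sum_add_distrib, Finset.mul_sum]
  have hsub : ∀ (i : Fin m) (j : Fin q) (k : Fin n),
      tmul A (X - Y) i j k = tmul A X i j k - tmul A Y i j k := by
    intro i j k
    simp_rw [tmul, Pi.sub_apply, mul_sub, Finset.sum_sub_distrib]
  have hsq : ∀ (i : Fin m) (j : Fin q) (k : Fin n),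
      ((tmul A (t • X + (1 - t) • Y) - B) i j k) ^ 2
        = t * ((tmul A X - B) i j k) ^ 2 + (1 - t) * ((tmul A Y - B) i j k) ^ 2
          - t * (1 - t) * ((tmul A (X - Y)) i j k) ^ 2 := by
    intro i j k
    simp only [Pi.sub_apply, hlin i j k, hsub i j k]
    ring
  have hNW : tnorm (tmul A (t • X + (1 - t) • Y) - B) ^ 2
      = t * tnorm (tmul A X - B) ^ 2 + (1 - t) * tnorm (tmul A Y - B) ^ 2
        - t * (1 - t) * tnorm (tmul A (X - Y)) ^ 2 := by
    rw [tnsq, tnsq, tnsq, tnsq]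
    simp_rw [hsq, Finset.sum_sub_distrib, Finset.sum_add_distrib, Finset.mul_sum]
  have hkey := key_bound A σmin hσ (X - Y)
  have hNZ : tnorm (X - Y) ^ 2 = ∑ s, ∑ j, ∑ r, (X - Y) s j r ^ 2 := tnsq _
  have hN3 : tnorm (tmul A (X - Y)) ^ 2 = ∑ i, ∑ j, ∑ k, (tmul A (X - Y)) i j k ^ 2 := tnsq _
  have hkey' : σmin ^ 2 * tnorm (X - Y) ^ 2 ≤ tnorm (tmul A (X - Y)) ^ 2 := by
    rw [hNZ, hN3]; exact hkey
  have htt : (0:ℝ) ≤ t * (1 - t) := mul_nonneg ht0 (by linarith)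
  have key2 : σmin ^ 2 * (t * (1 - t)) * tnorm (X - Y) ^ 2
      ≤ (t * (1 - t)) * tnorm (tmul A (X - Y)) ^ 2 := by
    have := mul_le_mul_of_nonneg_left hkey' htt
    calc σmin ^ 2 * (t * (1 - t)) * tnorm (X - Y) ^ 2
        = (t * (1 - t)) * (σmin ^ 2 * tnorm (X - Y) ^ 2) := by ring
      _ ≤ (t * (1 - t)) * tnorm (tmul A (X - Y)) ^ 2 := this
  set N1 := tnorm (tmul A X - B) ^ 2
  set N2 := tnorm (tmul A Y - B) ^ 2
  set N3 := tnorm (tmul A (X - Y)) ^ 2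
  set NZ := tnorm (X - Y) ^ 2
  rw [hNW]
  have expand : t * (1 / (2 * (m:ℝ)) * N1) + (1 - t) * (1 / (2 * (m:ℝ)) * N2)
        - σmin ^ 2 / m / 2 * (t * (1 - t)) * NZ
        - 1 / (2 * (m:ℝ)) * (t * N1 + (1 - t) * N2 - t * (1 - t) * N3)
      = 1 / (2 * (m:ℝ)) * ((t * (1 - t)) * N3 - σmin ^ 2 * (t * (1 - t)) * NZ) := by
    field_simp
    ring
  have hpos : (0:ℝ) ≤ 1 / (2 * (m:ℝ)) := by positivity
  nlinarith [mul_nonneg hpos (sub_nonneg.mpr key2), expand]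
end
end
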